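/- Let Σ be a finite alphabet with at least two elements and let θ be a primitive substitution on Σ. Then there exists a constant C' > 0 such that for all integers n ≥ 1, the number β_{F[θ]}(n) of words of length at most n in the language F[θ] satisfies β_{F[θ]}(n) ≤ C'·n². -/

import Mathlib

/-- The extension of a substitution `θ` to finite words, by concatenation:
`θ(w₁…w_m) = θ(w₁)…θ(w_m)`. -/
def substWord {α : Type*} (θ : α → List α) : List α → List α :=
  fun w => w.foldr (fun a acc => θ a ++ acc) []

/-- `θ` is a substitution: every letter maps to a nonempty word. -/
def IsSubstitution {α : Type*} (θ : α → List α) : Prop := ∀ a, θ a ≠ []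

/-- `θ` is primitive: there is `k ≥ 1` such that for all letters `a, b`,
the letter `b` occurs in `θ^k(a)`. -/
def IsPrimitiveSubst {α : Type*} (θ : α → List α) : Prop :=
  ∃ k, 1 ≤ k ∧ ∀ a b : α, b ∈ (substWord θ)^[k] [a]

/-- The language `F[θ]`: all nonempty factors (contiguous subwords) of the words
`θ^m(a)`, over all `m ≥ 1` and letters `a`. -/
def substLang {α : Type*} (θ : α → List α) : Set (List α) :=
  {w | w ≠ [] ∧ ∃ m, 1 ≤ m ∧ ∃ a : α, w <:+: (substWord θ)^[m] [a]}

section Aux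

variable {A : Type*}

lemma substWord_nil (θ : A → List A) : substWord θ [] = [] := rfl

lemma substWord_cons (θ : A → List A) (a : A) (w : List A) :
    substWord θ (a :: w) = θ a ++ substWord θ w := rfl

lemma substWord_singleton (θ : A → List A) (a : A) :
    substWord θ [a] = θ a := by
  simp [substWord]

lemma substWord_append (θ : A → List A) (x y : List A) :
    substWord θ (x ++ y) = substWord θ x ++ substWord θ y := by
  induction x with
  | nil => simp [substWord_nil]
  | cons a x ih => simp [substWord_cons, ih]

lemma substWord_eq_flatten (θ : A → List A) (u : List A) :
    substWord θ u = (u.map θ).flatten := by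
  induction u with
  | nil => rfl
  | cons a u ih => simp [substWord_cons, ih]

lemma iter_nil (θ : A → List A) (m : ℕ) : (substWord θ)^[m] [] = [] := by
  induction m with
  | zero => rfl
  | succ m ih => rw [Function.iterate_succ_apply, substWord_nil, ih]

lemma iter_append (θ : A → List A) (m : ℕ) (x y : List A) :
    (substWord θ)^[m] (x ++ y) = (substWord θ)^[m] x ++ (substWord θ)^[m] y := by
  induction m generalizing x y with
  | zero => rfl
  | succ m ih => rw [Function.iterate_succ_apply, substWord_append, ih,
      Function.iterate_succ_apply, Function.iterate_succ_apply]

lemma iter_blocks (θ : A → List A) (m : ℕ) (u : List A) :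
    (substWord θ)^[m] u = (u.map (fun c => (substWord θ)^[m] [c])).flatten := by
  induction u with
  | nil => simp [iter_nil]
  | cons a u ih =>
    have h : a :: u = [a] ++ u := rfl
    rw [h, iter_append, ih]; simp

lemma iter_infix (θ : A → List A) (m : ℕ) {u v : List A} (h : u <:+: v) :
    (substWord θ)^[m] u <:+: (substWord θ)^[m] v := by
  obtain ⟨s, t, rfl⟩ := h
  rw [iter_append, iter_append]
  exact ⟨_, _, rfl⟩

lemma iter_succ_eq (θ : A → List A) (m : ℕ) (c : A) :
    (substWord θ)^[m + 1] [c] = (substWord θ)^[m] (θ c) := by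
  rw [Function.iterate_succ_apply, substWord_singleton]

lemma length_iter_le (θ : A → List A) (m B : ℕ)
    (hB : ∀ c, ((substWord θ)^[m] [c]).length ≤ B) (u : List A) :
    ((substWord θ)^[m] u).length ≤ u.length * B := by
  rw [iter_blocks]
  induction u with
  | nil => simp
  | cons a u ih =>
    simp only [List.map_cons, List.flatten_cons, List.length_append, List.length_cons]
    have h1 := hB a
    have h2 : (u.map (fun c => (substWord θ)^[m] [c])).flatten.length ≤ u.length * B := ih
    rw [Nat.succ_mul]
    omega

lemma length_subst_ge (θ : A → List A) (h2 : ∀ c, 2 ≤ (θ c).length) (u : List A) :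
    2 * u.length ≤ (substWord θ u).length := by
  induction u with
  | nil => simp [substWord_nil]
  | cons a u ih =>
    rw [substWord_cons]
    simp only [List.length_append, List.length_cons]
    have := h2 a
    omega

lemma length_iter_ge (θ : A → List A) (h2 : ∀ c, 2 ≤ (θ c).length) (m : ℕ) (u : List A) :
    2 ^ m * u.length ≤ ((substWord θ)^[m] u).length := by
  induction m generalizing u with
  | zero => simp
  | succ m ih =>
    rw [Function.iterate_succ_apply]
    calc 2 ^ (m + 1) * u.length = 2 ^ m * (2 * u.length) := by ring
    _ ≤ 2 ^ m * (substWord θ u).length :=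
        Nat.mul_le_mul_left _ (length_subst_ge θ h2 u)
    _ ≤ _ := ih _

lemma card_le_length [Fintype A] {l : List A} (h : ∀ b : A, b ∈ l) :
    Fintype.card A ≤ l.length := by
  classical
  calc Fintype.card A = Finset.univ.card := rfl
  _ ≤ l.toFinset.card := Finset.card_le_card (fun b _ => List.mem_toFinset.mpr (h b))
  _ ≤ l.length := l.toFinset_card_le

lemma singleton_infix_of_mem {a : A} {l : List A} (h : a ∈ l) : [a] <:+: l := by
  obtain ⟨s, t, rfl⟩ := List.append_of_mem h
  exact ⟨s, t, by simp⟩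

lemma infix_append_cases {w x y : List A} (h : w <:+: x ++ y) :
    w <:+: x ∨ w <:+: y ∨
      ∃ s p, w = s ++ p ∧ s ≠ [] ∧ s <:+ x ∧ p ≠ [] ∧ p <+: y := by
  induction x with
  | nil => exact Or.inr (Or.inl (by simpa using h))
  | cons a x ih =>
    rw [List.cons_append, List.infix_cons_iff] at h
    rcases h with h | h
    · have h' : w <+: (a :: x) ++ y := by simpa using h
      by_cases hlen : w.length ≤ (a :: x).length
      · exact Or.inl (List.prefix_of_prefix_length_le h' (List.prefix_append _ _) hlen).isInfix
      · have hx : (a :: x) <+: w :=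
          List.prefix_of_prefix_length_le (List.prefix_append _ _) h' (by omega)
        obtain ⟨p, rfl⟩ := hx
        refine Or.inr (Or.inr ⟨a :: x, p, rfl, by simp, List.suffix_refl _, ?_, ?_⟩)
        · intro hp
          subst hp
          simp at hlen
        · exact (List.prefix_append_right_inj (a :: x)).mp h'
    · rcases ih h with h1 | h1 | ⟨s, p, hw, hs, hsx, hp, hpy⟩
      · exact Or.inl (List.infix_cons h1)
      · exact Or.inr (Or.inl h1)
      · exact Or.inr (Or.inr ⟨s, p, hw, hs, hsx.trans (List.suffix_cons a x), hp, hpy⟩)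

lemma cover {f : A → List A} {n : ℕ} :
    ∀ u w : List A, w.length ≤ n → (∀ c, n ≤ (f c).length) →
      w <:+: (u.map f).flatten →
      ∃ v, v <:+: u ∧ v.length ≤ 2 ∧ w <:+: (v.map f).flatten := by
  intro u
  induction u with
  | nil =>
    intro w _ _ h
    simp only [List.map_nil, List.flatten_nil] at h
    exact ⟨[], List.infix_refl _, by simp, by simpa using h⟩
  | cons a u ih =>
    intro w hw hbl h
    rw [List.map_cons, List.flatten_cons] at h
    rcases infix_append_cases h with h1 | h1 | ⟨s, p, hweq, _, hsx, hp, hpy⟩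
    · exact ⟨[a], ⟨[], u, rfl⟩, by simp, by simpa using h1⟩
    · obtain ⟨v, hv, h2, h3⟩ := ih w hw hbl h1
      exact ⟨v, List.infix_cons hv, h2, h3⟩
    · match u with
      | [] =>
        exfalso
        simp only [List.map_nil, List.flatten_nil] at hpy
        exact hp (List.eq_nil_of_prefix_nil hpy)
      | b :: u' =>
        rw [List.map_cons, List.flatten_cons] at hpy
        have hplen : p.length ≤ (f b).length := by
          have h1 : p.length ≤ w.length := by
            rw [hweq]; simp
          exact h1.trans (hw.trans (hbl b))
        have hpb : p <+: f b :=
          List.prefix_of_prefix_length_le hpy (List.prefix_append _ _) hplen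
        refine ⟨[a, b], ⟨[], u', rfl⟩, by simp, ?_⟩
        obtain ⟨e, he⟩ := hsx
        obtain ⟨t, ht⟩ := hpb
        refine ⟨e, t, ?_⟩
        rw [hweq]
        simp only [List.map_cons, List.map_nil, List.flatten_cons, List.flatten_nil,
          List.append_nil]
        rw [← he, ← ht]
        simp [List.append_assoc]

end Aux

/-- For a primitive substitution on a finite alphabet with at least two letters, the
number of words of length at most `n` in `F[θ]` is at most `C'·n²`. -/
theorem stmt_1 {A : Type*} [Fintype A] (hA : 2 ≤ Fintype.card A)
    (θ : A → List A) (hsub : IsSubstitution θ) (hprim : IsPrimitiveSubst θ) :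
    ∃ C' : ℝ, 0 < C' ∧ ∀ n : ℕ, 1 ≤ n →
      (({w ∈ substLang θ | w.length ≤ n}).ncard : ℝ) ≤ C' * n ^ 2 := by
  classical
  obtain ⟨k, hk1, hkmem⟩ := hprim
  set φ : A → List A := fun a => (substWord θ)^[k] [a] with hφdef
  have hφmem : ∀ a b : A, b ∈ φ a := hkmem
  have hφ2 : ∀ a, 2 ≤ (φ a).length := fun a => hA.trans (card_le_length (hφmem a))
  have hAne : Nonempty A := Fintype.card_pos_iff.mp (by omega)
  obtain ⟨a₀⟩ := hAne
  -- θ^[k] coincides with substWord φ on all words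
  have hTk : (substWord θ)^[k] = substWord φ := by
    funext u
    rw [iter_blocks θ k u, substWord_eq_flatten]
  set L : ℕ := Finset.univ.sup (fun a => (φ a).length) with hLdef
  have hL : ∀ a, (φ a).length ≤ L := fun a => Finset.le_sup (f := fun a => (φ a).length) (Finset.mem_univ a)
  have hL2 : 2 ≤ L := (hφ2 a₀).trans (hL a₀)
  set pairs : List (List A) :=
    Finset.univ.toList.flatMap (fun a => Finset.univ.toList.map (fun b => [a, b]))
    with hpairsdef
  have hpairmem : ∀ a b : A, [a, b] ∈ pairs := by
    intro a b
    simp [hpairsdef, List.mem_flatMap]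
  set V : List A := pairs.flatten with hVdef
  have hVpos : 0 < V.length := by
    have h := (List.infix_of_mem_flatten (hpairmem a₀ a₀)).length_le
    simp only [List.length_cons, List.length_nil] at h
    simp only [hVdef]
    omega
  have hLpos : 0 < L := by omega
  have h0 : 0 < V.length * L ^ 2 := Nat.mul_pos hVpos (pow_pos hLpos 2)
  refine ⟨((V.length * L ^ 2 : ℕ) : ℝ) ^ 2,
    pow_pos (by exact_mod_cast h0) 2, ?_⟩
  intro n hn
  -- the minimal level m at which every block has length ≥ n
  have hex : ∃ m, ∀ b : A, n ≤ ((substWord φ)^[m] [b]).length := by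
    refine ⟨n, fun b => ?_⟩
    have h1 := length_iter_ge φ hφ2 n [b]
    have h2 := Nat.lt_two_pow_self (n := n)
    simp only [List.length_cons, List.length_nil, mul_one] at h1
    omega
  set m : ℕ := Nat.find hex with hmdef
  have hm : ∀ b : A, n ≤ ((substWord φ)^[m] [b]).length := Nat.find_spec hex
  -- per-letter upper bound at level m
  have hup : ∀ c : A, ((substWord φ)^[m] [c]).length ≤ L ^ 2 * n := by
    have hcases : m = 0 ∨ m = 1 ∨ ∃ j, m = j + 2 := by
      rcases Nat.lt_or_ge m 2 with h | h
      · have h' : m = 0 ∨ m = 1 := by omega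
        rcases h' with h' | h'
        · exact Or.inl h'
        · exact Or.inr (Or.inl h')
      · exact Or.inr (Or.inr ⟨m - 2, by omega⟩)
    rcases hcases with h0 | h1 | ⟨j, hj⟩
    · intro c
      rw [h0]
      simp only [Function.iterate_zero_apply, List.length_cons, List.length_nil]
      have : 1 ≤ L ^ 2 := Nat.one_le_pow 2 L (by omega)
      nlinarith
    · intro c
      rw [h1]
      simp only [Function.iterate_one, substWord_singleton]
      calc (φ c).length ≤ L := hL c
      _ ≤ L ^ 2 * n := by nlinarith
    · have hnot : ¬ ∀ b : A, n ≤ ((substWord φ)^[j + 1] [b]).length := by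
        have := Nat.find_min hex (show j + 1 < m by omega)
        simpa using this
      push_neg at hnot
      obtain ⟨b₀, hb₀⟩ := hnot
      have hAd : ∀ d : A, ((substWord φ)^[j] [d]).length ≤ n := by
        intro d
        have h1 : [d] <:+: φ b₀ := singleton_infix_of_mem (hφmem b₀ d)
        have h2 := (iter_infix φ j h1).length_le
        rw [← iter_succ_eq] at h2
        omega
      have hmid : ∀ c : A, ((substWord φ)^[j + 1] [c]).length ≤ L * n := by
        intro c
        rw [iter_succ_eq]
        calc ((substWord φ)^[j] (φ c)).length ≤ (φ c).length * n :=
              length_iter_le φ j n hAd (φ c)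
        _ ≤ L * n := Nat.mul_le_mul_right _ (hL c)
      intro c
      rw [hj, iter_succ_eq]
      calc ((substWord φ)^[j + 1] (φ c)).length ≤ (φ c).length * (L * n) :=
            length_iter_le φ (j + 1) (L * n) hmid (φ c)
      _ ≤ L * (L * n) := Nat.mul_le_mul_right _ (hL c)
      _ = L ^ 2 * n := by ring
  -- the master word z
  set z : List A := (substWord φ)^[m] V with hzdef
  have hzlen : z.length ≤ V.length * (L ^ 2 * n) := length_iter_le φ m _ hup V
  -- every word in the language of length ≤ n is an infix of z
  have hmem : ∀ w ∈ {w ∈ substLang θ | w.length ≤ n}, w ≠ [] ∧ w <:+: z := by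
    rintro w ⟨⟨hne, m', hm'1, a, hwi⟩, hwle⟩
    refine ⟨hne, ?_⟩
    -- lifting
    have hlift : ∀ i : ℕ, w <:+: (substWord θ)^[m' + i * k] [a] := by
      intro i
      induction i with
      | zero => simpa using hwi
      | succ i ih =>
        have heq : (substWord θ)^[m' + (i + 1) * k] [a]
            = (substWord θ)^[m' + i * k] ((substWord θ)^[k] [a]) := by
          rw [← Function.iterate_add_apply]
          congr 1
          ring
        rw [heq]
        exact ih.trans (iter_infix θ _ (singleton_infix_of_mem (hkmem a a)))
    have hw2 : w <:+: (substWord φ)^[m] ((substWord θ)^[m'] [a]) := by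
      have h4 : (substWord θ)^[m' + m * k] [a]
          = (substWord φ)^[m] ((substWord θ)^[m'] [a]) := by
        rw [show m' + m * k = k * m + m' by ring, Function.iterate_add_apply,
          Function.iterate_mul, hTk]
      rw [← h4]
      exact hlift m
    set u : List A := (substWord θ)^[m'] [a] with hudef
    have hw3 : w <:+: (u.map (fun c => (substWord φ)^[m] [c])).flatten := by
      rw [← iter_blocks]
      exact hw2
    obtain ⟨v, hvu, hv2, hwv⟩ := cover u w hwle hm hw3
    -- pad v to a pair
    have hpair : ∃ c d : A, w <:+: (substWord φ)^[m] [c, d] := by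
      match v, hv2, hwv with
      | [], _, hwv =>
        exfalso
        simp only [List.map_nil, List.flatten_nil] at hwv
        exact hne (List.eq_nil_of_infix_nil hwv)
      | [c], _, hwv =>
        refine ⟨c, c, ?_⟩
        simp only [List.map_cons, List.map_nil, List.flatten_cons, List.flatten_nil,
          List.append_nil] at hwv
        rw [iter_blocks]
        simp only [List.map_cons, List.map_nil, List.flatten_cons, List.flatten_nil,
          List.append_nil]
        exact hwv.trans ⟨[], (substWord φ)^[m] [c], rfl⟩
      | [c, d], _, hwv =>
        refine ⟨c, d, ?_⟩
        rw [iter_blocks]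
        simpa using hwv
      | c :: d :: e :: v', hv2, _ => simp at hv2
    obtain ⟨c, d, hcd⟩ := hpair
    have hcdV : [c, d] <:+: V := List.infix_of_mem_flatten (hpairmem c d)
    exact hcd.trans (iter_infix φ m hcdV)
  -- counting
  have hsubset : {w ∈ substLang θ | w.length ≤ n} ⊆
      ↑((Finset.range z.length ×ˢ Finset.range z.length).image
        (fun q : ℕ × ℕ => (z.drop q.1).take (q.2 + 1))) := by
    intro w hw
    obtain ⟨hne, hwz⟩ := hmem w hw
    obtain ⟨t1, t2, ht⟩ := hwz
    have hwlen : 1 ≤ w.length := List.length_pos_iff.mpr hne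
    have hzl : z.length = t1.length + w.length + t2.length := by
      rw [← ht]; simp only [List.length_append]
    simp only [Finset.coe_image, Set.mem_image, Finset.mem_coe, Finset.mem_product,
      Finset.mem_range]
    refine ⟨(t1.length, w.length - 1), ?_, ?_⟩
    · simp only [Finset.mem_product, Finset.mem_range]
      constructor <;> omega
    · show (z.drop t1.length).take (w.length - 1 + 1) = w
      have h1 : z = t1 ++ (w ++ t2) := by rw [← ht]; simp
      rw [h1, List.drop_left]
      have h2 : w.length - 1 + 1 = w.length := by omega
      rw [h2, List.take_left]
  have hfin : (({w ∈ substLang θ | w.length ≤ n}).ncard : ℝ) ≤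
      ((V.length * L ^ 2 * n : ℕ) : ℝ) ^ 2 := by
    have h1 : ({w ∈ substLang θ | w.length ≤ n}).ncard ≤
        ((Finset.range z.length ×ˢ Finset.range z.length).image
          (fun q : ℕ × ℕ => (z.drop q.1).take (q.2 + 1))).card := by
      calc ({w ∈ substLang θ | w.length ≤ n}).ncard
          ≤ (↑((Finset.range z.length ×ˢ Finset.range z.length).image
            (fun q : ℕ × ℕ => (z.drop q.1).take (q.2 + 1))) : Set (List A)).ncard :=
            Set.ncard_le_ncard hsubset (Finset.finite_toSet _)
      _ = _ := Set.ncard_coe_finset _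
    have h2 : ((Finset.range z.length ×ˢ Finset.range z.length).image
        (fun q : ℕ × ℕ => (z.drop q.1).take (q.2 + 1))).card ≤ z.length * z.length := by
      calc _ ≤ (Finset.range z.length ×ˢ Finset.range z.length).card :=
            Finset.card_image_le
      _ = z.length * z.length := by simp [Finset.card_product]
    have h3 : ({w ∈ substLang θ | w.length ≤ n}).ncard ≤ (V.length * L ^ 2 * n) ^ 2 := by
      have hz2 : z.length ≤ V.length * L ^ 2 * n := by
        calc z.length ≤ V.length * (L ^ 2 * n) := hzlen
        _ = V.length * L ^ 2 * n := by ring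
      calc ({w ∈ substLang θ | w.length ≤ n}).ncard ≤ z.length * z.length := h1.trans h2
      _ ≤ (V.length * L ^ 2 * n) * (V.length * L ^ 2 * n) := Nat.mul_le_mul hz2 hz2
      _ = (V.length * L ^ 2 * n) ^ 2 := by ring
    calc (({w ∈ substLang θ | w.length ≤ n}).ncard : ℝ)
        ≤ (((V.length * L ^ 2 * n) ^ 2 : ℕ) : ℝ) := by exact_mod_cast h3
    _ = ((V.length * L ^ 2 * n : ℕ) : ℝ) ^ 2 := by push_cast; ring
  calc (({w ∈ substLang θ | w.length ≤ n}).ncard : ℝ)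
      ≤ ((V.length * L ^ 2 * n : ℕ) : ℝ) ^ 2 := hfin
  _ = ((V.length * L ^ 2 : ℕ) : ℝ) ^ 2 * (n : ℝ) ^ 2 := by push_cast; ring
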